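/- (Block positive-semidefiniteness inequality.) Let d ≥ 1, k ≥ 0, χ ∈ ℝ, let S be a symmetric d×d real matrix with tr S = 2χ, and let w ∈ ℝ^d. If the symmetric (d+1)×(d+1) block matrix [[S + (χ+k)I_d, w],[wᵀ, χ+k]] is positive semidefinite, then |w|² ≤ (d+2)(χ+k)². -/

import Mathlib

/-- **Block positive-semidefiniteness inequality.** Let `d ≥ 1`, `k ≥ 0`,
`χ ∈ ℝ`, `S` a symmetric `d×d` real matrix with `tr S = 2χ`, and `w ∈ ℝ^d`.
If the symmetric `(d+1)×(d+1)` block matrix `[[S + (χ+k)I, w],[wᵀ, χ+k]]` is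
positive semidefinite, then `|w|² ≤ (d+2)(χ+k)²`. -/
theorem block_psd_inequality (d : ℕ) (hd : 1 ≤ d) (k χ : ℝ) (hk : 0 ≤ k)
    (S : Matrix (Fin d) (Fin d) ℝ) (hS : S.IsSymm) (htr : S.trace = 2 * χ)
    (w : Fin d → ℝ)
    (hpsd : (Matrix.fromBlocks
        (S + (χ + k) • (1 : Matrix (Fin d) (Fin d) ℝ))
        (Matrix.of fun i (_ : Unit) => w i)
        (Matrix.of fun (_ : Unit) j => w j)
        (Matrix.of fun (_ : Unit) (_ : Unit) => χ + k)).PosSemidef) :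
    ∑ i, (w i) ^ 2 ≤ (d + 2) * (χ + k) ^ 2 := by
  set c : ℝ := χ + k with hc
  set M := (Matrix.fromBlocks
        (S + (χ + k) • (1 : Matrix (Fin d) (Fin d) ℝ))
        (Matrix.of fun i (_ : Unit) => w i)
        (Matrix.of fun (_ : Unit) j => w j)
        (Matrix.of fun (_ : Unit) (_ : Unit) => χ + k)) with hM
  have hq := hpsd.dotProduct_mulVec_nonneg
  -- c ≥ 0
  have hc0 : 0 ≤ c := by
    have := hq (Sum.elim (fun _ => 0) (fun _ => 1))
    simpa [hM, dotProduct, Matrix.mulVec, Fintype.sum_sum_type,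
      Matrix.fromBlocks] using this
  -- each minor inequality : w i ^ 2 ≤ (S i i + c) * c
  have key : ∀ i, (w i) ^ 2 ≤ (S i i + c) * c := by
    intro i
    have hquad : ∀ s : ℝ, 0 ≤ c * (s * s) + (2 * w i) * s + (S i i + c) := by
      intro s
      have := hq (Sum.elim (fun j => if j = i then 1 else 0) (fun _ => s))
      simp only [hM, dotProduct, Matrix.mulVec, Fintype.sum_sum_type,
        Matrix.fromBlocks, Sum.elim_inl, Sum.elim_inr, Matrix.of_apply,
        star_trivial, Finset.univ_unique, Finset.sum_singleton,
        Matrix.add_apply, Matrix.smul_apply, Matrix.one_apply,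
        mul_ite, mul_one, mul_zero, ite_mul, zero_mul, one_mul,
        Finset.sum_ite_eq', Finset.mem_univ, if_true, smul_eq_mul] at this
      -- `this` should now be an inequality in terms of S i i, c, w i, s
      nlinarith [this]
    have hd := discrim_le_zero hquad
    rw [discrim] at hd
    nlinarith [hd]
  have sum_le : ∑ i, (w i) ^ 2 ≤ ∑ i : Fin d, (S i i + c) * c :=
    Finset.sum_le_sum fun i _ => key i
  have htr' : ∑ i : Fin d, S i i = 2 * χ := by
    simpa [Matrix.trace, Matrix.diag] using htr
  have : ∑ i : Fin d, (S i i + c) * c = (2 * χ + d * c) * c := by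
    rw [← Finset.sum_mul]
    congr 1
    rw [Finset.sum_add_distrib, htr', Finset.sum_const, Finset.card_univ,
      Fintype.card_fin, nsmul_eq_mul]
  rw [this] at sum_le
  have hχc : χ ≤ c := by simp [hc]; linarith
  nlinarith [sum_le, hc0, hχc, Nat.one_le_iff_ne_zero.mp hd]
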